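/- Let $\rho>2$ and $K\ge 2/\rho$. Let $v:[-1,1]\to\mathbb{R}$ be twice continuously differentiable and even, with $-1<v(x)\le 0$ for all $x\in[-1,1]$, $v(-1)=v(1)=0$, $\big(\int_{-1}^{1}|v''(x)|^2\,\mathrm{d}x\big)^{1/2}\le K$, and $\int_{-1}^{1}\frac{\mathrm{d}x}{1+v(x)}\le\rho$. Then $\min_{x\in[-1,1]} v(x) \;\ge\; \frac{1}{\rho^3 K^2}-1$. -/

import Mathlib

open Set intervalIntegral

set_option maxHeartbeats 1600000

theorem stmt_3 (ρ K : ℝ) (hρ : 2 < ρ) (hK : 2 / ρ ≤ K) (v v' v'' : ℝ → ℝ)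
    (hv' : ∀ x ∈ Set.Icc (-1:ℝ) 1, HasDerivAt v (v' x) x)
    (hv'' : ∀ x ∈ Set.Icc (-1:ℝ) 1, HasDerivAt v' (v'' x) x)
    (hv''c : ContinuousOn v'' (Set.Icc (-1) 1))
    (heven : ∀ x ∈ Set.Icc (-1:ℝ) 1, v (-x) = v x)
    (hv : ∀ x ∈ Set.Icc (-1:ℝ) 1, -1 < v x ∧ v x ≤ 0)
    (hvb : v (-1) = 0 ∧ v 1 = 0)
    (hK2 : Real.sqrt (∫ x in (-1:ℝ)..1, |v'' x| ^ 2) ≤ K)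
    (hρ2 : (∫ x in (-1:ℝ)..1, 1 / (1 + v x)) ≤ ρ) :
    ∀ x ∈ Set.Icc (-1:ℝ) 1, 1 / (ρ ^ 3 * K ^ 2) - 1 ≤ v x := by
  have hρ0 : (0:ℝ) < ρ := by linarith
  have hK0 : 0 < K := lt_of_lt_of_le (by positivity) hK
  have hρK : 2 ≤ ρ * K := by
    rw [div_le_iff₀ hρ0] at hK; linarith
  have hρ3K2 : 8 ≤ ρ ^ 3 * K ^ 2 := by nlinarith [sq_nonneg (ρ*K - 2), sq_nonneg (ρ*K)]
  -- continuity
  have hvc : ContinuousOn v (Icc (-1:ℝ) 1) := fun x hx =>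
    ((hv' x hx).continuousAt).continuousWithinAt
  have hv'c : ContinuousOn v' (Icc (-1:ℝ) 1) := fun x hx =>
    ((hv'' x hx).continuousAt).continuousWithinAt
  -- minimum point
  obtain ⟨x₀, hx₀, hmin⟩ := isCompact_Icc.exists_isMinOn (s := Icc (-1:ℝ) 1)
    (by norm_num) hvc
  suffices h : 1 / (ρ ^ 3 * K ^ 2) ≤ 1 + v x₀ by
    intro x hx
    have := isMinOn_iff.mp hmin x hx
    linarith
  -- WLOG the min is at x₁ ≤ 0
  obtain ⟨x₁, hx₁mem, hx₁le, hx₁v⟩ : ∃ x₁ ∈ Icc (-1:ℝ) 1, x₁ ≤ 0 ∧ v x₁ = v x₀ := by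
    rcases le_or_gt x₀ 0 with h | h
    · exact ⟨x₀, hx₀, h, rfl⟩
    · exact ⟨-x₀, ⟨by linarith [hx₀.2], by linarith [hx₀.1]⟩, by linarith, heven x₀ hx₀⟩
  have hmin' : ∀ y ∈ Icc (-1:ℝ) 1, v x₁ ≤ v y := by
    intro y hy; rw [hx₁v]; exact isMinOn_iff.mp hmin y hy
  set ε : ℝ := 1 + v x₁ with hεdef
  have hgoal : (1 / (ρ ^ 3 * K ^ 2) ≤ ε) → 1 / (ρ ^ 3 * K ^ 2) ≤ 1 + v x₀ := by
    intro h; rw [hεdef, hx₁v] at h; exact h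
  apply hgoal
  have hε0 : 0 < ε := by have := (hv x₁ hx₁mem).1; simp [hεdef]; linarith
  -- boundary case
  rcases eq_or_lt_of_le hx₁mem.1 with hb | hb
  · have : v x₁ = 0 := by rw [← hb]; exact hvb.1
    have : ε = 1 := by rw [hεdef, this]; ring
    rw [this]
    rw [div_le_one (by linarith)]; linarith
  -- interior: derivative vanishes
  have hx₁1 : x₁ < 1 := lt_of_le_of_lt hx₁le one_pos
  have hd0 : v' x₁ = 0 := by
    have hnh : Icc (-1:ℝ) 1 ∈ nhds x₁ := Icc_mem_nhds hb hx₁1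
    have hloc : IsLocalMin v x₁ := Filter.eventually_of_mem hnh (fun y hy => hmin' y hy)
    exact hloc.hasDerivAt_eq_zero (hv' x₁ hx₁mem)
  -- trivial case: ε large
  rcases le_or_gt K (8 * ε) with hcase | hcase
  · rw [div_le_iff₀ (by positivity)]
    nlinarith [sq_nonneg (ρ*K), mul_pos hρ0 hK0]
  -- main case
  have hsub : ∀ a b : ℝ, a ∈ Icc (-1:ℝ) 1 → b ∈ Icc (-1:ℝ) 1 → uIcc a b ⊆ Icc (-1:ℝ) 1 :=
    fun a b ha hb => uIcc_subset_Icc ha hb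
  have hx₁p1 : x₁ + 1 ≤ 1 := by linarith
  -- L² bound
  have hInonneg : 0 ≤ ∫ x in (-1:ℝ)..1, |v'' x| ^ 2 :=
    intervalIntegral.integral_nonneg (by norm_num) (fun x _ => by positivity)
  have hK2' : (∫ x in (-1:ℝ)..1, |v'' x| ^ 2) ≤ K ^ 2 := by
    nlinarith [Real.sq_sqrt hInonneg, Real.sqrt_nonneg (∫ x in (-1:ℝ)..1, |v'' x| ^ 2)]
  have hv''sqc : ContinuousOn (fun x => |v'' x| ^ 2) (Icc (-1:ℝ) 1) := by
    exact (hv''c.abs.pow 2)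
  have hv''int : ∀ a b : ℝ, a ∈ Icc (-1:ℝ) 1 → b ∈ Icc (-1:ℝ) 1 →
      IntervalIntegrable (fun x => |v'' x| ^ 2) MeasureTheory.volume a b :=
    fun a b ha hb => (hv''sqc.mono (hsub a b ha hb)).intervalIntegrable
  -- partial L² bound
  have hL2part : ∀ t : ℝ, t ∈ Icc x₁ 1 → (∫ u in x₁..t, |v'' u| ^ 2) ≤ K ^ 2 := by
    intro t ht
    have htmem : t ∈ Icc (-1:ℝ) 1 := ⟨le_trans hx₁mem.1 ht.1, ht.2⟩
    have h1 : (∫ u in (-1:ℝ)..x₁, |v'' u| ^ 2) + (∫ u in x₁..(1:ℝ), |v'' u| ^ 2)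
        = ∫ u in (-1:ℝ)..1, |v'' u| ^ 2 :=
      intervalIntegral.integral_add_adjacent_intervals
        (hv''int _ _ (by norm_num) hx₁mem) (hv''int _ _ hx₁mem (by norm_num))
    have h2 : (∫ u in x₁..t, |v'' u| ^ 2) + (∫ u in t..(1:ℝ), |v'' u| ^ 2)
        = ∫ u in x₁..(1:ℝ), |v'' u| ^ 2 :=
      intervalIntegral.integral_add_adjacent_intervals
        (hv''int _ _ hx₁mem htmem) (hv''int _ _ htmem (by norm_num))
    have h3 : 0 ≤ ∫ u in (-1:ℝ)..x₁, |v'' u| ^ 2 :=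
      intervalIntegral.integral_nonneg hx₁mem.1 (fun x _ => by positivity)
    have h4 : 0 ≤ ∫ u in t..(1:ℝ), |v'' u| ^ 2 :=
      intervalIntegral.integral_nonneg htmem.2 (fun x _ => by positivity)
    linarith
  -- Step B : derivative bound
  have hB : ∀ t ∈ Icc x₁ (x₁ + 1), v' t ≤ K * (t - x₁) ^ ((1:ℝ)/2) := by
    intro t ht
    have htmem : t ∈ Icc (-1:ℝ) 1 := ⟨le_trans hx₁mem.1 ht.1, le_trans ht.2 hx₁p1⟩
    rcases eq_or_lt_of_le ht.1 with heq | hlt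
    · rw [← heq, hd0, sub_self, Real.zero_rpow (by norm_num), mul_zero]
    · set w : ℝ := (t - x₁) ^ ((1:ℝ)/2) with hw
      have hw0 : 0 < w := Real.rpow_pos_of_pos (by linarith) _
      have hw2 : w ^ 2 = t - x₁ := by
        rw [hw, ← Real.rpow_natCast ((t - x₁) ^ ((1:ℝ)/2)) 2, ← Real.rpow_mul (by linarith)]
        norm_num
      set a : ℝ := K / w with ha
      have ha0 : 0 < a := div_pos hK0 hw0
      have hFTC : ∫ u in x₁..t, v'' u = v' t - v' x₁ := by
        apply intervalIntegral.integral_eq_sub_of_hasDerivAt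
        · intro u hu; exact hv'' u (hsub x₁ t hx₁mem htmem hu)
        · exact ((hv''c.mono (hsub x₁ t hx₁mem htmem)).intervalIntegrable)
      have hptwise : ∀ u ∈ Icc x₁ t, v'' u ≤ a/2 + |v'' u| ^ 2 / (2*a) := by
        intro u _
        set b := |v'' u| with hbdef
        have h1 : v'' u ≤ b := le_abs_self _
        have h2 : b ≤ a/2 + b^2/(2*a) := by
          rw [← sub_nonneg]
          have heq : a/2 + b^2/(2*a) - b = (b - a)^2/(2*a) := by field_simp; ring
          rw [heq]; positivity
        linarith
      have hmono : (∫ u in x₁..t, v'' u) ≤ ∫ u in x₁..t, (a/2 + |v'' u| ^ 2 / (2*a)) := by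
        apply intervalIntegral.integral_mono_on (le_of_lt hlt)
        · exact (hv''c.mono (hsub x₁ t hx₁mem htmem)).intervalIntegrable
        · exact (continuousOn_const.add ((hv''sqc.mono (hsub x₁ t hx₁mem htmem)).div_const _)).intervalIntegrable
        · exact hptwise
      have hval : (∫ u in x₁..t, (a/2 + |v'' u| ^ 2 / (2*a)))
          = (t - x₁) * (a/2) + (∫ u in x₁..t, |v'' u| ^ 2) / (2*a) := by
        rw [intervalIntegral.integral_add (by exact intervalIntegrable_const)
          (((hv''sqc.mono (hsub x₁ t hx₁mem htmem)).div_const _).intervalIntegrable)]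
        rw [intervalIntegral.integral_const, intervalIntegral.integral_div]
        simp [smul_eq_mul]
      have hpart := hL2part t ⟨ht.1, htmem.2⟩
      have hdiv : (∫ u in x₁..t, |v'' u| ^ 2) / (2*a) ≤ K ^ 2 / (2*a) :=
        (div_le_div_iff_of_pos_right (by positivity)).mpr hpart
      have hle : v' t ≤ (t - x₁) * (a/2) + K ^ 2 / (2*a) := by linarith
      have hfin : (t - x₁) * (a/2) + K ^ 2 / (2*a) = K * w := by
        rw [ha, ← hw2]; field_simp; ring
      linarith
  -- Step C : pointwise upper bound on v
  have hC : ∀ y ∈ Icc x₁ (x₁ + 1), v y ≤ v x₁ + (2/3) * K * (y - x₁) ^ ((3:ℝ)/2) := by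
    intro y hy
    have hymem : y ∈ Icc (-1:ℝ) 1 := ⟨le_trans hx₁mem.1 hy.1, le_trans hy.2 hx₁p1⟩
    have hFTC : ∫ t in x₁..y, v' t = v y - v x₁ := by
      apply intervalIntegral.integral_eq_sub_of_hasDerivAt
      · intro u hu; exact hv' u (hsub x₁ y hx₁mem hymem hu)
      · exact (hv'c.mono (hsub x₁ y hx₁mem hymem)).intervalIntegrable
    have hrpowc : Continuous (fun t : ℝ => K * (t - x₁) ^ ((1:ℝ)/2)) :=
      continuous_const.mul ((continuous_id.sub continuous_const).rpow_const
        (fun x => Or.inr (by norm_num)))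
    have hmono : (∫ t in x₁..y, v' t) ≤ ∫ t in x₁..y, K * (t - x₁) ^ ((1:ℝ)/2) := by
      apply intervalIntegral.integral_mono_on hy.1
      · exact (hv'c.mono (hsub x₁ y hx₁mem hymem)).intervalIntegrable
      · exact hrpowc.intervalIntegrable _ _
      · exact fun t ht => hB t ⟨ht.1, le_trans ht.2 hy.2⟩
    have hcomp : (∫ t in x₁..y, K * (t - x₁) ^ ((1:ℝ)/2))
        = (2/3) * K * (y - x₁) ^ ((3:ℝ)/2) - (2/3) * K * (x₁ - x₁) ^ ((3:ℝ)/2) := by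
      apply intervalIntegral.integral_eq_sub_of_hasDerivAt
      · intro t _
        have h1 : HasDerivAt (fun u : ℝ => u - x₁) 1 t := (hasDerivAt_id t).sub_const x₁
        have h2 : HasDerivAt (fun u : ℝ => u ^ ((3:ℝ)/2)) (((3:ℝ)/2) * (t - x₁) ^ ((3:ℝ)/2 - 1)) (t - x₁) :=
          Real.hasDerivAt_rpow_const (Or.inr (by norm_num))
        have h3 := (h2.comp t h1).const_mul ((2:ℝ)/3 * K)
        simp only [Function.comp_def] at h3
        refine h3.congr_deriv ?_
        rw [show ((3:ℝ)/2 - 1) = (1:ℝ)/2 by norm_num]; ring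
      · exact hrpowc.intervalIntegrable _ _
    rw [sub_self, Real.zero_rpow (by norm_num), mul_zero, sub_zero] at hcomp
    linarith
  -- the scale s
  set s : ℝ := (ε / K) ^ ((2:ℝ)/3) with hs
  have hεK0 : 0 < ε / K := div_pos hε0 hK0
  have hs0 : 0 < s := Real.rpow_pos_of_pos hεK0 _
  have hsKε : K * s ^ ((3:ℝ)/2) = ε := by
    rw [hs, ← Real.rpow_mul (le_of_lt hεK0)]
    norm_num
    field_simp
  have hs14 : s ≤ 1/4 := by
    have h1 : ε / K ≤ 1/8 := by rw [div_le_div_iff₀ hK0 (by norm_num)]; linarith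
    have h2 : s ≤ ((1:ℝ)/8) ^ ((2:ℝ)/3) :=
      Real.rpow_le_rpow (le_of_lt hεK0) h1 (by norm_num)
    have h3 : ((1:ℝ)/8) ^ ((2:ℝ)/3) = 1/4 := by
      rw [show ((1:ℝ)/8) = ((1:ℝ)/2) ^ (3:ℕ) by norm_num, ← Real.rpow_natCast ((1:ℝ)/2) 3,
        ← Real.rpow_mul (by norm_num)]
      norm_num
    linarith
  -- rpow values
  have h94 : ((9:ℝ)/4) ^ ((3:ℝ)/2) = 27/8 := by
    rw [show (9/4:ℝ) = ((3:ℝ)/2) ^ (2:ℕ) by norm_num, ← Real.rpow_natCast ((3:ℝ)/2) 2,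
      ← Real.rpow_mul (by norm_num)]
    norm_num
  have h44 : ((4:ℝ)) ^ ((3:ℝ)/2) = 8 := by
    rw [show (4:ℝ) = ((2:ℝ)) ^ (2:ℕ) by norm_num, ← Real.rpow_natCast (2:ℝ) 2,
      ← Real.rpow_mul (by norm_num)]
    norm_num
  have h11 : ((1:ℝ)) ^ ((3:ℝ)/2) = 1 := Real.one_rpow _
  -- pointwise bound on pieces
  have hpiece : ∀ c : ℝ, 0 < c → c ≤ 4 → ∀ y ∈ Icc x₁ (x₁ + c * s),
      1/(ε * (1 + (2/3) * c ^ ((3:ℝ)/2))) ≤ 1/(1 + v y) := by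
    intro c hc0 hc4 y hy
    have hcs : c * s ≤ 1 := by nlinarith
    have hymem : y ∈ Icc (-1:ℝ) 1 :=
      ⟨le_trans hx₁mem.1 hy.1, le_trans hy.2 (by linarith)⟩
    have h1 := hC y ⟨hy.1, by linarith [hy.2]⟩
    have h2 : (y - x₁) ^ ((3:ℝ)/2) ≤ (c*s) ^ ((3:ℝ)/2) :=
      Real.rpow_le_rpow (by linarith [hy.1]) (by linarith [hy.2]) (by norm_num)
    have h3 : (c*s) ^ ((3:ℝ)/2) = c ^ ((3:ℝ)/2) * s ^ ((3:ℝ)/2) :=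
      Real.mul_rpow (le_of_lt hc0) (le_of_lt hs0)
    have h5 : K * (y - x₁) ^ ((3:ℝ)/2) ≤ K * (c ^ ((3:ℝ)/2) * s ^ ((3:ℝ)/2)) := by
      apply mul_le_mul_of_nonneg_left _ (le_of_lt hK0)
      rw [← h3]; exact h2
    have h6 : K * (c ^ ((3:ℝ)/2) * s ^ ((3:ℝ)/2)) = c ^ ((3:ℝ)/2) * ε := by
      rw [← hsKε]; ring
    have h4 : 1 + v y ≤ ε * (1 + (2/3) * c ^ ((3:ℝ)/2)) := by
      rw [h6] at h5
      have h7 : ε * (1 + (2/3) * c ^ ((3:ℝ)/2)) = ε + (2/3) * (c ^ ((3:ℝ)/2) * ε) := by ring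
      rw [h7]
      linarith only [h1, h5, hεdef]
    have hpos : 0 < 1 + v y := by linarith [(hv y hymem).1]
    exact one_div_le_one_div_of_le hpos h4
  -- piecewise integral lower bounds
  have hfc : ContinuousOn (fun y => 1/(1 + v y)) (Icc (-1:ℝ) 1) :=
    continuousOn_const.div (continuousOn_const.add hvc)
      (fun y hy => ne_of_gt (by linarith [(hv y hy).1]))
  have hfint : ∀ a b : ℝ, a ∈ Icc (-1:ℝ) 1 → b ∈ Icc (-1:ℝ) 1 →
      IntervalIntegrable (fun y => 1/(1 + v y)) MeasureTheory.volume a b :=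
    fun a b ha hb => (hfc.mono (hsub a b ha hb)).intervalIntegrable
  have hfpos : ∀ y ∈ Icc (-1:ℝ) 1, 0 ≤ 1/(1 + v y) :=
    fun y hy => le_of_lt (div_pos one_pos (by linarith [(hv y hy).1]))
  set p1 : ℝ := x₁ + s with hp1
  set p2 : ℝ := x₁ + (9/4)*s with hp2
  set p3 : ℝ := x₁ + 4*s with hp3
  have hp1mem : p1 ∈ Icc (-1:ℝ) 1 := ⟨by rw [hp1]; linarith [hx₁mem.1], by rw [hp1]; linarith⟩
  have hp2mem : p2 ∈ Icc (-1:ℝ) 1 := ⟨by rw [hp2]; nlinarith [hx₁mem.1], by rw [hp2]; linarith⟩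
  have hp3mem : p3 ∈ Icc (-1:ℝ) 1 := ⟨by rw [hp3]; linarith [hx₁mem.1], by rw [hp3]; linarith⟩
  -- lower bound each of the three pieces
  have hI1 : s * (1/(ε * (1 + (2/3) * 1))) ≤ ∫ y in x₁..p1, 1/(1 + v y) := by
    have := intervalIntegral.integral_mono_on (f := fun _ : ℝ => 1/(ε * (1 + (2/3) * 1)))
      (g := fun y => 1/(1 + v y)) (by rw [hp1]; linarith)
      intervalIntegrable_const (hfint x₁ p1 hx₁mem hp1mem)
      (fun y hy => by
        have h := hpiece 1 one_pos (by norm_num) y (by rwa [one_mul])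
        rwa [h11] at h)
    rwa [intervalIntegral.integral_const, smul_eq_mul, hp1, add_sub_cancel_left] at this
  have hI2 : ((5:ℝ)/4) * s * (1/(ε * (1 + (2/3) * (27/8)))) ≤ ∫ y in p1..p2, 1/(1 + v y) := by
    have := intervalIntegral.integral_mono_on (f := fun _ : ℝ => 1/(ε * (1 + (2/3) * (27/8))))
      (g := fun y => 1/(1 + v y)) (by rw [hp1, hp2]; linarith)
      intervalIntegrable_const (hfint p1 p2 hp1mem hp2mem)
      (fun y hy => by
        have hy' : y ∈ Icc x₁ (x₁ + (9/4) * s) :=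
          ⟨by rw [hp1] at hy; linarith [hy.1], by rw [hp2] at hy; linarith [hy.2]⟩
        have h := hpiece ((9:ℝ)/4) (by norm_num) (by norm_num) y hy'
        rwa [h94] at h)
    rw [intervalIntegral.integral_const, smul_eq_mul] at this
    have hw : p2 - p1 = (5/4) * s := by rw [hp1, hp2]; ring
    rw [hw] at this; exact this
  have hI3 : ((7:ℝ)/4) * s * (1/(ε * (1 + (2/3) * 8))) ≤ ∫ y in p2..p3, 1/(1 + v y) := by
    have := intervalIntegral.integral_mono_on (f := fun _ : ℝ => 1/(ε * (1 + (2/3) * 8)))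
      (g := fun y => 1/(1 + v y)) (by rw [hp2, hp3]; linarith)
      intervalIntegrable_const (hfint p2 p3 hp2mem hp3mem)
      (fun y hy => by
        have hy' : y ∈ Icc x₁ (x₁ + 4 * s) :=
          ⟨by rw [hp2] at hy; linarith [hy.1], by rw [hp3] at hy; linarith [hy.2]⟩
        have h := hpiece 4 (by norm_num) (by norm_num) y hy'
        rwa [h44] at h)
    rw [intervalIntegral.integral_const, smul_eq_mul] at this
    have hw : p3 - p2 = (7/4) * s := by rw [hp2, hp3]; ring
    rw [hw] at this; exact this
  -- splitting
  have hsplitA : (∫ y in (-1:ℝ)..x₁, 1/(1 + v y)) + (∫ y in x₁..(1:ℝ), 1/(1 + v y))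
      = ∫ y in (-1:ℝ)..1, 1/(1 + v y) :=
    intervalIntegral.integral_add_adjacent_intervals (hfint _ _ (by norm_num) hx₁mem)
      (hfint _ _ hx₁mem (by norm_num))
  have hsplitB : (∫ y in x₁..p3, 1/(1 + v y)) + (∫ y in p3..(1:ℝ), 1/(1 + v y))
      = ∫ y in x₁..(1:ℝ), 1/(1 + v y) :=
    intervalIntegral.integral_add_adjacent_intervals (hfint _ _ hx₁mem hp3mem)
      (hfint _ _ hp3mem (by norm_num))
  have hsplitC : (∫ y in x₁..p1, 1/(1 + v y)) + (∫ y in p1..p2, 1/(1 + v y))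
      = ∫ y in x₁..p2, 1/(1 + v y) :=
    intervalIntegral.integral_add_adjacent_intervals (hfint _ _ hx₁mem hp1mem)
      (hfint _ _ hp1mem hp2mem)
  have hsplitD : (∫ y in x₁..p2, 1/(1 + v y)) + (∫ y in p2..p3, 1/(1 + v y))
      = ∫ y in x₁..p3, 1/(1 + v y) :=
    intervalIntegral.integral_add_adjacent_intervals (hfint _ _ hx₁mem hp2mem)
      (hfint _ _ hp2mem hp3mem)
  have hn1 : 0 ≤ ∫ y in (-1:ℝ)..x₁, 1/(1 + v y) :=
    intervalIntegral.integral_nonneg hx₁mem.1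
      (fun y hy => hfpos y ⟨hy.1, le_trans hy.2 hx₁mem.2⟩)
  have hn2 : 0 ≤ ∫ y in p3..(1:ℝ), 1/(1 + v y) :=
    intervalIntegral.integral_nonneg hp3mem.2
      (fun y hy => hfpos y ⟨le_trans hp3mem.1 hy.1, hy.2⟩)
  -- combine: s/ε ≤ ρ
  have hsum : s * (1/(ε * (1 + (2/3) * 1))) + (5/4) * s * (1/(ε * (1 + (2/3) * (27/8))))
      + (7/4) * s * (1/(ε * (1 + (2/3) * 8))) ≤ ρ := by
    linarith only [hI1, hI2, hI3, hρ2, hsplitA, hsplitB, hsplitC, hsplitD, hn1, hn2]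
  have hsρε : s ≤ ρ * ε := by
    have e1 : s * (1/(ε * (1 + (2/3) * 1))) = (3/5) * (s/ε) := by field_simp; ring
    have e2 : (5/4) * s * (1/(ε * (1 + (2/3) * (27/8)))) = (5/13) * (s/ε) := by field_simp; ring
    have e3 : (7/4) * s * (1/(ε * (1 + (2/3) * 8))) = (21/76) * (s/ε) := by field_simp; ring
    rw [e1, e2, e3] at hsum
    have hse : 0 < s / ε := div_pos hs0 hε0
    have : s / ε ≤ ρ := by linarith only [hsum, hse]
    rw [div_le_iff₀ hε0] at this; linarith only [this]
  -- conclude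
  have hcube : s ^ (3:ℕ) = (ε/K) ^ (2:ℕ) := by
    rw [hs, ← Real.rpow_natCast ((ε/K) ^ ((2:ℝ)/3)) 3, ← Real.rpow_mul (le_of_lt hεK0),
      ← Real.rpow_natCast (ε/K) 2]
    norm_num
  have hcube2 : s ^ (3:ℕ) ≤ (ρ * ε) ^ (3:ℕ) := pow_le_pow_left₀ (le_of_lt hs0) hsρε 3
  rw [hcube] at hcube2
  have h4 : ε^2 ≤ ρ^3 * ε^3 * K^2 := by
    rw [div_pow, div_le_iff₀ (by positivity)] at hcube2
    nlinarith [hcube2]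
  rw [div_le_iff₀ (by positivity)]
  nlinarith only [h4, mul_pos hε0 hε0, hε0]
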